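/- Every selfadjoint linear relation τ in ℂ^p admits a representation τ = ker[C D] = {(u, u') ∈ ℂ^p × ℂ^p : C u + D u' = 0} where C, D are p×p complex matrices satisfying C D* = D C* and rank [C D] = p. Conversely, for any matrices C, D ∈ ℂ^{p×p} with C D* = D C* and rank [C D] = p, the relation ker[C D] is selfadjoint in ℂ^p. -/

import Mathlib

set_option synthInstance.maxHeartbeats 1000000
set_option synthInstance.maxSize 1000
set_option maxHeartbeats 2000000

noncomputable section

/-- The adjoint of a linear relation `τ` in `ℂ^p` (with the standard inner product). -/
def adjSet {p : ℕ} (τ : Submodule ℂ ((Fin p → ℂ) × (Fin p → ℂ))) :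
    Set ((Fin p → ℂ) × (Fin p → ℂ)) :=
  {u | ∀ v ∈ τ,
    (∑ k, (starRingEnd ℂ) (v.1 k) * u.2 k) = ∑ k, (starRingEnd ℂ) (v.2 k) * u.1 k}

/-- The relation `ker [C D] = {(u, u') : C u + D u' = 0}` in `ℂ^p`. -/
def kerRel {p : ℕ} (C D : Matrix (Fin p) (Fin p) ℂ) :
    Submodule ℂ ((Fin p → ℂ) × (Fin p → ℂ)) :=
  LinearMap.ker
    ((C.mulVecLin.comp (LinearMap.fst ℂ (Fin p → ℂ) (Fin p → ℂ))) +
      (D.mulVecLin.comp (LinearMap.snd ℂ (Fin p → ℂ) (Fin p → ℂ))))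

/-- The `p × 2p` block matrix `[C D]`. -/
def rowPair {p : ℕ} (C D : Matrix (Fin p) (Fin p) ℂ) :
    Matrix (Fin p) (Fin p ⊕ Fin p) ℂ :=
  Matrix.of fun i => Sum.elim (C i) (D i)

namespace SelfadjRelAux
open Module
@[reducible] def nacgOf {F G : Type*} [AddCommGroup F] [Module ℂ F] [NormedAddCommGroup G]
    [InnerProductSpace ℂ G] (e : F ≃ₗ[ℂ] G) : NormedAddCommGroup F :=
  NormedAddCommGroup.induced F G e e.injective
@[reducible] def ipsOf {F G : Type*} [AddCommGroup F] [Module ℂ F] [NormedAddCommGroup G]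
    [InnerProductSpace ℂ G] (e : F ≃ₗ[ℂ] G) :
    @InnerProductSpace ℂ F _ (nacgOf e).toSeminormedAddCommGroup :=
  letI := nacgOf e
  { NormedSpace.induced ℂ F G e with
    inner := fun x y => inner ℂ (e x) (e y)
    norm_sq_eq_re_inner := fun x => norm_sq_eq_re_inner (e x)
    conj_inner_symm := fun x y => inner_conj_symm (e x) (e y)
    add_left := fun x y z => by simp only [map_add, inner_add_left]
    smul_left := fun x y r => by simp only [map_smul, inner_smul_left] }
def Ep (p : ℕ) := Fin p → ℂ
instance (p : ℕ) : AddCommGroup (Ep p) := Pi.addCommGroup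
instance (p : ℕ) : Module ℂ (Ep p) := Pi.module _ _ _
instance (p : ℕ) : NormedAddCommGroup (Ep p) :=
  nacgOf (WithLp.linearEquiv 2 ℂ (Fin p → ℂ)).symm
instance (p : ℕ) : InnerProductSpace ℂ (Ep p) :=
  ipsOf (WithLp.linearEquiv 2 ℂ (Fin p → ℂ)).symm
instance (p : ℕ) : FiniteDimensional ℂ (Ep p) := inferInstanceAs (FiniteDimensional ℂ (Fin p → ℂ))
def Fp (p : ℕ) := Ep p × Ep p
instance (p : ℕ) : AddCommGroup (Fp p) := Prod.instAddCommGroup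
instance (p : ℕ) : Module ℂ (Fp p) := Prod.instModule
instance (p : ℕ) : NormedAddCommGroup (Fp p) :=
  nacgOf (WithLp.linearEquiv 2 ℂ (Ep p × Ep p)).symm
instance (p : ℕ) : InnerProductSpace ℂ (Fp p) :=
  ipsOf (WithLp.linearEquiv 2 ℂ (Ep p × Ep p)).symm
instance (p : ℕ) : FiniteDimensional ℂ (Fp p) := inferInstanceAs (FiniteDimensional ℂ (Ep p × Ep p))
noncomputable def J (p : ℕ) : Fp p ≃ₗ[ℂ] Fp p :=
  LinearEquiv.ofLinear
    (LinearMap.prod (-(LinearMap.snd ℂ (Ep p) (Ep p))) (LinearMap.fst ℂ (Ep p) (Ep p)))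
    (LinearMap.prod (LinearMap.snd ℂ (Ep p) (Ep p)) (-(LinearMap.fst ℂ (Ep p) (Ep p))))
    (by ext x : 1; exact Prod.ext (neg_neg _) rfl)
    (by ext x : 1; exact Prod.ext rfl (neg_neg _))
variable {p : ℕ}
lemma J_fst (x : Fp p) : (J p x).1 = -x.2 := rfl
lemma J_snd (x : Fp p) : (J p x).2 = x.1 := rfl

lemma Ep_inner (x y : Ep p) : (inner ℂ x y : ℂ) = ∑ k, (starRingEnd ℂ) (x k) * y k := by
  show inner ℂ (WithLp.toLp 2 x : EuclideanSpace ℂ (Fin p)) (WithLp.toLp 2 y) = _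
  rw [PiLp.inner_apply]
  exact Finset.sum_congr rfl fun k _ => by
    show inner ℂ (x k) (y k) = _
    rw [RCLike.inner_apply]; ring

lemma Fp_inner (x y : Fp p) : (inner ℂ x y : ℂ) = inner ℂ x.1 y.1 + inner ℂ x.2 y.2 := by
  show inner ℂ (WithLp.toLp 2 x : WithLp 2 (Ep p × Ep p)) (WithLp.toLp 2 y) = _
  rw [WithLp.prod_inner_apply]; rfl

lemma finrank_Ep : Module.finrank ℂ (Ep p) = p := Module.finrank_fin_fun ℂ

lemma inner_J (v u : Fp p) : (inner ℂ (J p v) u : ℂ)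
    = (∑ k, (starRingEnd ℂ) (v.1 k) * u.2 k) - ∑ k, (starRingEnd ℂ) (v.2 k) * u.1 k := by
  rw [Fp_inner, J_fst, J_snd]
  erw [inner_neg_left, Ep_inner, Ep_inner]
  ring

noncomputable def Mcd (C D : Matrix (Fin p) (Fin p) ℂ) : Fp p →ₗ[ℂ] Ep p :=
  (C.mulVecLin.comp (LinearMap.fst ℂ (Fin p → ℂ) (Fin p → ℂ))) +
    (D.mulVecLin.comp (LinearMap.snd ℂ (Fin p → ℂ) (Fin p → ℂ)))

lemma Mcd_apply (C D : Matrix (Fin p) (Fin p) ℂ) (u : Fp p) :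
    Mcd C D u = C.mulVec u.1 + D.mulVec u.2 := rfl

noncomputable def Acd (C D : Matrix (Fin p) (Fin p) ℂ) : Ep p →ₗ[ℂ] Fp p :=
  LinearMap.prod (C.conjTranspose.mulVecLin) (D.conjTranspose.mulVecLin)

lemma Acd_fst (C D : Matrix (Fin p) (Fin p) ℂ) (x : Ep p) :
    (Acd C D x).1 = C.conjTranspose.mulVec x := rfl
lemma Acd_snd (C D : Matrix (Fin p) (Fin p) ℂ) (x : Ep p) :
    (Acd C D x).2 = D.conjTranspose.mulVec x := rfl

lemma adjoint_Mcd (C D : Matrix (Fin p) (Fin p) ℂ) :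
    LinearMap.adjoint (Mcd C D) = Acd C D := by
  refine ((LinearMap.eq_adjoint_iff (Acd C D) (Mcd C D)).mpr fun x y => ?_).symm
  refine (Fp_inner _ _).trans ?_
  rw [Ep_inner, Ep_inner]
  erw [Acd_fst, Acd_snd]
  have h2 : (inner ℂ x (Mcd C D y) : ℂ)
      = ∑ j, (starRingEnd ℂ) (x j) * ((C.mulVec y.1) j + (D.mulVec y.2) j) := by
    rw [Ep_inner]
    exact Finset.sum_congr rfl fun j _ => by rw [Mcd_apply]; rfl
  erw [h2]
  simp only [Ep_inner, Matrix.mulVec, dotProduct,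
    Matrix.conjTranspose_apply, map_sum, map_mul, Complex.conj_conj, mul_add,
    Finset.sum_add_distrib, Finset.sum_mul, Finset.mul_sum]
  congr 1 <;> rw [Finset.sum_comm] <;> exact Finset.sum_congr rfl fun j _ =>
    Finset.sum_congr rfl fun k _ => by rw [RCLike.star_def, Complex.conj_conj]; ring


lemma adjSet_eq (τ : Submodule ℂ ((Fin p → ℂ) × (Fin p → ℂ))) :
    adjSet τ = ((Submodule.map (J p).toLinearMap (τ : Submodule ℂ (Fp p)))ᗮ : Set (Fp p)) := by
  ext u
  constructor
  · intro h w hw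
    obtain ⟨v, hv, rfl⟩ := hw
    exact (inner_J v u).trans (sub_eq_zero.mpr (h v hv))
  · intro h v hv
    exact sub_eq_zero.mp ((inner_J v u).symm.trans (h (J p v) ⟨v, hv, rfl⟩))

lemma ker_eq_ortho_range_adjoint {E F : Type*} [NormedAddCommGroup E] [NormedAddCommGroup F]
    [InnerProductSpace ℂ E] [InnerProductSpace ℂ F] [FiniteDimensional ℂ E]
    [FiniteDimensional ℂ F] (M : E →ₗ[ℂ] F) :
    LinearMap.ker M = (LinearMap.range (LinearMap.adjoint M))ᗮ := by
  ext u
  rw [LinearMap.mem_ker, Submodule.mem_orthogonal]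
  constructor
  · rintro h w ⟨x, rfl⟩
    rw [LinearMap.adjoint_inner_left, h, inner_zero_right]
  · intro h
    have := h (LinearMap.adjoint M (M u)) ⟨M u, rfl⟩
    rw [LinearMap.adjoint_inner_left] at this
    exact inner_self_eq_zero.mp this

lemma range_adjoint_eq {E F : Type*} [NormedAddCommGroup E] [NormedAddCommGroup F]
    [InnerProductSpace ℂ E] [InnerProductSpace ℂ F] [FiniteDimensional ℂ E]
    [FiniteDimensional ℂ F] (M : E →ₗ[ℂ] F) :
    LinearMap.range (LinearMap.adjoint M) = (LinearMap.ker M)ᗮ := by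
  rw [ker_eq_ortho_range_adjoint, Submodule.orthogonal_orthogonal]


lemma rowPair_mulVec (C D : Matrix (Fin p) (Fin p) ℂ) (x : Fin p ⊕ Fin p → ℂ) :
    (rowPair C D).mulVec x = C.mulVec (x ∘ Sum.inl) + D.mulVec (x ∘ Sum.inr) := by
  funext i
  simp [rowPair, Matrix.mulVec, dotProduct, Fintype.sum_sum_type]

lemma rank_rowPair (C D : Matrix (Fin p) (Fin p) ℂ) :
    (rowPair C D).rank = Module.finrank ℂ (LinearMap.range (Mcd C D)) := by
  have hr : LinearMap.range ((rowPair C D).mulVecLin)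
      = (LinearMap.range (Mcd C D) : Submodule ℂ (Fin p → ℂ)) := by
    ext y
    simp only [LinearMap.mem_range, Matrix.mulVecLin_apply]
    constructor
    · rintro ⟨x, rfl⟩
      exact ⟨(x ∘ Sum.inl, x ∘ Sum.inr), (rowPair_mulVec C D x).symm⟩
    · rintro ⟨u, rfl⟩
      refine ⟨Sum.elim u.1 u.2, ?_⟩
      rw [rowPair_mulVec]
      rfl
  rw [Matrix.rank, hr]
  rfl

lemma finrank_Fp : Module.finrank ℂ (Fp p) = 2 * p := by
  rw [show Module.finrank ℂ (Fp p) = Module.finrank ℂ (Ep p × Ep p) from rfl, Module.finrank_prod,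
    finrank_Ep]
  ring

lemma decomp (L : Fp p →ₗ[ℂ] Ep p) :
    Mcd (Matrix.of fun i j => L ((Pi.single j 1 : Fin p → ℂ), 0) i)
        (Matrix.of fun i j => L (0, (Pi.single j 1 : Fin p → ℂ)) i) = L := by
  have h1 : (Matrix.of fun i j => L ((Pi.single j 1 : Fin p → ℂ), 0) i).mulVecLin
      = L ∘ₗ LinearMap.inl ℂ (Fin p → ℂ) (Fin p → ℂ) := by
    apply Module.Basis.ext (Pi.basisFun ℂ (Fin p))
    intro j
    rw [Pi.basisFun_apply, Matrix.mulVecLin_apply, Matrix.mulVec_single_one]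
    rfl
  have h2 : (Matrix.of fun i j => L (0, (Pi.single j 1 : Fin p → ℂ)) i).mulVecLin
      = L ∘ₗ LinearMap.inr ℂ (Fin p → ℂ) (Fin p → ℂ) := by
    apply Module.Basis.ext (Pi.basisFun ℂ (Fin p))
    intro j
    rw [Pi.basisFun_apply, Matrix.mulVecLin_apply, Matrix.mulVec_single_one]
    rfl
  refine LinearMap.ext fun u => ?_
  have e1 : (Matrix.of fun i j => L ((Pi.single j 1 : Fin p → ℂ), 0) i).mulVec u.1
      = L (u.1, 0) := congrFun (congrArg DFunLike.coe h1) u.1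
  have e2 : (Matrix.of fun i j => L (0, (Pi.single j 1 : Fin p → ℂ)) i).mulVec u.2
      = L (0, u.2) := congrFun (congrArg DFunLike.coe h2) u.2
  rw [Mcd_apply, e1, e2]
  exact (L.map_add _ _).symm.trans (congrArg L (Prod.ext (add_zero _) (zero_add _)))


lemma kerRel_eq (C D : Matrix (Fin p) (Fin p) ℂ) :
    (kerRel C D : Submodule ℂ (Fp p)) = LinearMap.ker (Mcd C D) := rfl

lemma converse (C D : Matrix (Fin p) (Fin p) ℂ)
    (hCD : C * D.conjTranspose = D * C.conjTranspose)
    (hrank : (rowPair C D).rank = p) :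
    ((kerRel C D : Set ((Fin p → ℂ) × (Fin p → ℂ))) = adjSet (kerRel C D)) := by
  have hle : (LinearMap.ker (Mcd C D))ᗮ ≤
      Submodule.map (J p).toLinearMap (LinearMap.ker (Mcd C D)) := by
    rw [← range_adjoint_eq]
    rintro w ⟨x, rfl⟩
    rw [adjoint_Mcd]
    refine ⟨(D.conjTranspose.mulVec x, -(C.conjTranspose.mulVec x)), ?_, ?_⟩
    · show Mcd C D _ = 0
      erw [Mcd_apply]
      show C.mulVec (D.conjTranspose.mulVec x) + D.mulVec (-(C.conjTranspose.mulVec x)) = 0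
      erw [Matrix.mulVec_neg, Matrix.mulVec_mulVec, Matrix.mulVec_mulVec, hCD, add_neg_cancel]
    · exact Prod.ext (neg_neg _) rfl
  have hfr : Module.finrank ℂ (LinearMap.ker (Mcd C D)) = p := by
    have h1 := LinearMap.finrank_range_add_finrank_ker (Mcd C D)
    rw [finrank_Fp] at h1
    rw [← rank_rowPair, hrank] at h1
    omega
  have hfrO : Module.finrank ℂ ((LinearMap.ker (Mcd C D))ᗮ) = p := by
    have := Submodule.finrank_add_finrank_orthogonal (K := LinearMap.ker (Mcd C D))
    rw [finrank_Fp, hfr] at this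
    omega
  have hfrJ : Module.finrank ℂ
      (Submodule.map (J p).toLinearMap (LinearMap.ker (Mcd C D))) = p := by
    rw [LinearEquiv.finrank_map_eq]
    exact hfr
  have heq : (LinearMap.ker (Mcd C D))ᗮ
      = Submodule.map (J p).toLinearMap (LinearMap.ker (Mcd C D)) :=
    Submodule.eq_of_le_of_finrank_eq hle (by rw [hfrO, hfrJ])
  have hS : (kerRel C D : Submodule ℂ (Fp p))
      = (Submodule.map (J p).toLinearMap (kerRel C D : Submodule ℂ (Fp p)))ᗮ := by
    have hoo : ((LinearMap.ker (Mcd C D))ᗮ)ᗮ = LinearMap.ker (Mcd C D) :=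
      Submodule.orthogonal_orthogonal _
    rw [kerRel_eq, ← heq, hoo]
  rw [adjSet_eq]
  exact congrArg SetLike.coe hS

lemma forward (τ : Submodule ℂ ((Fin p → ℂ) × (Fin p → ℂ)))
    (h : (τ : Set ((Fin p → ℂ) × (Fin p → ℂ))) = adjSet τ) :
    ∃ C D : Matrix (Fin p) (Fin p) ℂ,
      C * D.conjTranspose = D * C.conjTranspose ∧
      (rowPair C D).rank = p ∧
      τ = kerRel C D := by
  have hS : (τ : Submodule ℂ (Fp p))
      = (Submodule.map (J p).toLinearMap (τ : Submodule ℂ (Fp p)))ᗮ :=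
    SetLike.coe_injective (h.trans (adjSet_eq τ))
  set S : Submodule ℂ (Fp p) := (τ : Submodule ℂ (Fp p)) with hSdef
  have hJ : Sᗮ = Submodule.map (J p).toLinearMap S := by
    conv_lhs => rw [hS]
    rw [Submodule.orthogonal_orthogonal]
  have hfr2 := Submodule.finrank_add_finrank_orthogonal (K := S)
  rw [finrank_Fp] at hfr2
  have hfrJ : Module.finrank ℂ Sᗮ = Module.finrank ℂ S := by
    rw [hJ, LinearEquiv.finrank_map_eq]
  have hfrO : Module.finrank ℂ Sᗮ = p := by omega
  let b : Basis (Fin p) ℂ Sᗮ := Module.finBasisOfFinrankEq ℂ _ hfrO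
  let N : Ep p →ₗ[ℂ] Fp p := Sᗮ.subtype ∘ₗ (b.equivFun.symm : (Fin p → ℂ) ≃ₗ[ℂ] Sᗮ).toLinearMap
  have hrangeN : LinearMap.range N = Sᗮ := by
    erw [LinearMap.range_comp, LinearEquiv.range, Submodule.map_top, Submodule.range_subtype]
  set M : Fp p →ₗ[ℂ] Ep p := LinearMap.adjoint N with hMdef
  have hadjM : LinearMap.adjoint M = N := LinearMap.adjoint_adjoint N
  have hMkr : LinearMap.ker M = S := by
    rw [ker_eq_ortho_range_adjoint, hadjM, hrangeN, Submodule.orthogonal_orthogonal]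
  set C : Matrix (Fin p) (Fin p) ℂ :=
    Matrix.of fun i j => M ((Pi.single j 1 : Fin p → ℂ), 0) i with hCdef
  set D : Matrix (Fin p) (Fin p) ℂ :=
    Matrix.of fun i j => M (0, (Pi.single j 1 : Fin p → ℂ)) i with hDdef
  have hMcd : Mcd C D = M := decomp M
  have hAcd : Acd C D = N := by rw [← adjoint_Mcd, hMcd, hadjM]
  refine ⟨C, D, ?_, ?_, ?_⟩
  · -- C Dᴴ = D Cᴴ
    have key : ∀ x : Ep p, (C * D.conjTranspose).mulVec x = (D * C.conjTranspose).mulVec x := by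
      intro x
      have hx : Acd C D x ∈ Submodule.map (J p).toLinearMap S := by
        rw [← hJ, ← hrangeN]
        exact hAcd ▸ ⟨x, rfl⟩
      obtain ⟨s, hs, hJs⟩ := hx
      have hs1 : s.1 = D.conjTranspose.mulVec x := congrArg Prod.snd hJs
      have hs2 : s.2 = -(C.conjTranspose.mulVec x) := by
        have h1 : -s.2 = C.conjTranspose.mulVec x := congrArg Prod.fst hJs
        erw [← h1, neg_neg]
      have hm : M s = 0 := by rw [← LinearMap.mem_ker, hMkr]; exact hs
      have h0 : C.mulVec s.1 + D.mulVec s.2 = 0 := by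
        rw [← Mcd_apply, hMcd]; exact hm
      erw [hs1, hs2, Matrix.mulVec_neg, Matrix.mulVec_mulVec, Matrix.mulVec_mulVec,
        add_neg_eq_zero] at h0
      exact h0
    ext i j
    have h2 := congrFun (key (Pi.single j 1)) i
    simpa using h2
  · -- rank
    rw [rank_rowPair, hMcd]
    have hrange : LinearMap.range M = (⊥ : Submodule ℂ (Ep p))ᗮ := by
      rw [hMdef, range_adjoint_eq]
      congr 1
      rw [LinearMap.ker_eq_bot]
      exact Sᗮ.injective_subtype.comp b.equivFun.symm.injective
    rw [hrange, Submodule.bot_orthogonal_eq_top, finrank_top, finrank_Ep]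
  · -- τ = kerRel C D
    have : (kerRel C D : Submodule ℂ (Fp p)) = S := by
      rw [kerRel_eq, hMcd, hMkr]
    exact this.symm

end SelfadjRelAux

/-- Every selfadjoint linear relation in `ℂ^p` is of the form `ker [C D]` with
`C D* = D C*` and `rank [C D] = p`; conversely every such `ker [C D]` is selfadjoint. -/
theorem selfadjoint_relation_kernel_representation (p : ℕ) :
    (∀ τ : Submodule ℂ ((Fin p → ℂ) × (Fin p → ℂ)),
      (τ : Set ((Fin p → ℂ) × (Fin p → ℂ))) = adjSet τ →
      ∃ C D : Matrix (Fin p) (Fin p) ℂ,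
        C * D.conjTranspose = D * C.conjTranspose ∧
        (rowPair C D).rank = p ∧
        τ = kerRel C D) ∧
    (∀ C D : Matrix (Fin p) (Fin p) ℂ,
      C * D.conjTranspose = D * C.conjTranspose →
      (rowPair C D).rank = p →
      ((kerRel C D : Set ((Fin p → ℂ) × (Fin p → ℂ))) = adjSet (kerRel C D))) :=
  ⟨fun τ h => SelfadjRelAux.forward τ h, fun C D h1 h2 => SelfadjRelAux.converse C D h1 h2⟩
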